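/- With the setup of i.i.d. samples X₁,…,X_{2s−1} and P₁ the mass of the ball around x of radius ‖x−X₁‖: for every 0 ≤ r ≤ 2s−2, E[(1−P₁)^{2s−2−r} P₁^r] = 1 / (C(2s−2,r)·(2s−1)). -/

import Mathlib

open MeasureTheory ProbabilityTheory Set Filter Topology

lemma cdf_preimage (ν : Measure ℝ) [IsProbabilityMeasure ν] (hat : ∀ c : ℝ, ν {c} = 0)
    {u : ℝ} (hu0 : 0 ≤ u) (hu1 : u < 1) :
    ν {t | cdf ν t ≤ u} = ENNReal.ofReal u := by
  have hll : ∀ c : ℝ, Function.leftLim (cdf ν) c = cdf ν c := by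
    intro c
    have h1 : (cdf ν).measure {c} = 0 := by rw [measure_cdf]; exact hat c
    rw [StieltjesFunction.measure_singleton] at h1
    have h2 : cdf ν c - Function.leftLim (cdf ν) c ≤ 0 := by
      by_contra h
      exact (ENNReal.ofReal_pos.mpr (lt_of_not_ge h)).ne' h1
    have h3 := (monotone_cdf ν).leftLim_le (le_refl c)
    linarith
  set S := {t | cdf ν t ≤ u} with hS
  rcases eq_empty_or_nonempty S with hSe | hSne
  · have hu : u ≤ 0 := by
      apply ge_of_tendsto' (tendsto_cdf_atBot ν)
      intro t
      by_contra h
      exact (eq_empty_iff_forall_notMem.mp hSe t) (le_of_not_ge h)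
    have : u = 0 := le_antisymm hu hu0
    simp [hSe, this]
  · have hbdd : BddAbove S := by
      have : ∀ᶠ t in atTop, u < cdf ν t := (tendsto_cdf_atTop ν).eventually_const_lt hu1
      obtain ⟨t0, ht0⟩ := this.exists
      exact ⟨t0, fun s hs => by
        by_contra h
        exact absurd (le_trans (monotone_cdf ν (le_of_not_ge h)) hs) (not_le.mpr ht0)⟩
    set τ := sSup S with hτ
    have hle : cdf ν τ ≤ u := by
      by_contra h
      have hlt : u < cdf ν τ := lt_of_not_ge h
      rw [← hll τ] at hlt
      have := ((monotone_cdf ν).tendsto_leftLim τ).eventually_const_lt hlt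
      obtain ⟨t, htu, htτ⟩ := (this.and self_mem_nhdsWithin).exists
      have : τ ≤ t := csSup_le hSne fun s hs => by
        by_contra hst
        exact absurd (le_trans (monotone_cdf ν (le_of_not_ge hst)) hs) (not_le.mpr htu)
      exact absurd this (not_le.mpr htτ)
    have hge : u ≤ cdf ν τ := by
      have htend : Tendsto (cdf ν) (𝓝[>] τ) (𝓝 (cdf ν τ)) :=
        ((cdf ν).right_continuous τ).tendsto.mono_left (nhdsWithin_mono _ Ioi_subset_Ici_self)
      refine ge_of_tendsto htend ?_
      filter_upwards [self_mem_nhdsWithin] with t ht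
      by_contra h
      exact absurd (le_csSup hbdd (le_of_not_ge h)) (not_le.mpr ht)
    have hequ : cdf ν τ = u := le_antisymm hle hge
    have hsub1 : S ⊆ Iic τ := fun s hs => le_csSup hbdd hs
    have hsub2 : Iio τ ⊆ S := by
      intro t ht
      obtain ⟨s, hs, hts⟩ := exists_lt_of_lt_csSup hSne ht
      exact le_trans (monotone_cdf ν hts.le) hs
    have h1 : ν S ≤ ENNReal.ofReal u := by
      calc ν S ≤ ν (Iic τ) := measure_mono hsub1
      _ = ENNReal.ofReal (cdf ν τ) := (ofReal_cdf ν τ).symm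
      _ = ENNReal.ofReal u := by rw [hequ]
    have h2 : ENNReal.ofReal u ≤ ν S := by
      calc ENNReal.ofReal u = ν (Iic τ) := by rw [← ofReal_cdf ν τ, hequ]
      _ ≤ ν (Iio τ) + ν {τ} := by
          rw [← Iio_union_right]; exact measure_union_le _ _
      _ = ν (Iio τ) := by rw [hat τ, add_zero]
      _ ≤ ν S := measure_mono hsub2
    exact le_antisymm h1 h2

lemma map_cdf_eq_uniform (ν : Measure ℝ) [IsProbabilityMeasure ν] (hat : ∀ c : ℝ, ν {c} = 0) :
    ν.map (cdf ν) = volume.restrict (Set.Icc (0:ℝ) 1) := by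
  have hm : Measurable (cdf ν) := (monotone_cdf ν).measurable
  have : IsProbabilityMeasure (ν.map (cdf ν)) := Measure.isProbabilityMeasure_map hm.aemeasurable
  refine MeasureTheory.Measure.ext_of_Iic _ _ (fun u => ?_)
  rw [Measure.map_apply hm measurableSet_Iic, Measure.restrict_apply measurableSet_Iic]
  rcases lt_or_ge u 0 with hu | hu0
  · have h1 : (cdf ν) ⁻¹' (Iic u) = ∅ := by
      ext t; simp only [mem_preimage, mem_Iic, mem_empty_iff_false, iff_false]
      exact fun h => absurd (le_trans (cdf_nonneg ν t) h) (not_le.mpr hu)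
    have h2 : Iic u ∩ Icc (0:ℝ) 1 = ∅ := by
      ext t; simp only [mem_inter_iff, mem_Iic, mem_Icc, mem_empty_iff_false, iff_false]
      rintro ⟨h1', h2', _⟩; linarith
    simp [h1, h2]
  rcases lt_or_ge u 1 with hu1 | hu1
  · have h1 : (cdf ν) ⁻¹' (Iic u) = {t | cdf ν t ≤ u} := rfl
    rw [h1, cdf_preimage ν hat hu0 hu1]
    have h2 : Iic u ∩ Icc (0:ℝ) 1 = Icc 0 u := by
      ext t; simp only [mem_inter_iff, mem_Iic, mem_Icc]
      constructor
      · rintro ⟨ht, ht0, _⟩; exact ⟨ht0, ht⟩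
      · rintro ⟨ht0, ht⟩; exact ⟨ht, ht0, by linarith⟩
    rw [h2, Real.volume_Icc, sub_zero]
  · have h1 : (cdf ν) ⁻¹' (Iic u) = univ := by
      ext t; simp only [mem_preimage, mem_Iic, mem_univ, iff_true]
      exact le_trans (cdf_le_one ν t) hu1
    have h2 : Iic u ∩ Icc (0:ℝ) 1 = Icc 0 1 := by
      rw [inter_eq_right]
      exact fun t ht => le_trans ht.2 hu1
    rw [h1, h2, Real.volume_Icc, sub_zero, measure_univ, ENNReal.ofReal_one]

lemma prod_shift (r a : ℕ) :
    r.factorial * ∏ j ∈ Finset.range (a + 1), (r + 1 + j) = (r + a + 1).factorial := by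
  induction a with
  | zero => simp [Nat.factorial_succ, Nat.mul_comm]
  | succ a ih =>
      rw [Finset.prod_range_succ, ← mul_assoc, ih]
      rw [show r + (a+1) + 1 = (r + a + 1) + 1 by ring, Nat.factorial_succ (r+a+1)]
      ring

lemma beta_nat (r a : ℕ) :
    ∫ x in (0:ℝ)..1, x ^ r * (1 - x) ^ a
      = (r.factorial * a.factorial : ℝ) / (r + a + 1).factorial := by
  have hu : 0 < Complex.re ((r : ℂ) + 1) := by simp; positivity
  have h := Complex.betaIntegral_eval_nat_add_one_right hu a
  rw [Complex.betaIntegral] at h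
  have hint : (∫ x in (0:ℝ)..1, ((x:ℂ)) ^ ((r:ℂ) + 1 - 1) * (1 - (x:ℂ)) ^ ((a:ℂ) + 1 - 1))
      = ((∫ x in (0:ℝ)..1, x ^ r * (1 - x) ^ a : ℝ) : ℂ) := by
    rw [← intervalIntegral.integral_ofReal]
    congr 1
    ext x
    push_cast
    rw [add_sub_cancel_right, add_sub_cancel_right, Complex.cpow_natCast, Complex.cpow_natCast]
  rw [hint] at h
  have hr0 : (r.factorial : ℂ) ≠ 0 := by exact_mod_cast (Nat.factorial_pos r).ne'
  have hprod : (∏ j ∈ Finset.range (a + 1), ((r:ℂ) + 1 + j)) = ((r + a + 1).factorial : ℂ) / (r.factorial : ℂ) := by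
    have hc : ((r.factorial * ∏ j ∈ Finset.range (a + 1), (r + 1 + j) : ℕ) : ℂ) = ((r + a + 1).factorial : ℂ) := by
      exact_mod_cast congrArg (Nat.cast : ℕ → ℂ) (prod_shift r a)
    push_cast at hc
    rw [eq_div_iff hr0, mul_comm]
    exact hc
  rw [hprod] at h
  have hra : ((r + a + 1).factorial : ℂ) ≠ 0 := by exact_mod_cast (Nat.factorial_pos _).ne'
  rw [div_div_eq_mul_div] at h
  have : ((∫ x in (0:ℝ)..1, x ^ r * (1 - x) ^ a : ℝ) : ℂ)
      = ((r.factorial * a.factorial : ℝ) / (r + a + 1).factorial : ℝ) := by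
    rw [h]; push_cast; ring
  exact_mod_cast this

/-- with `P₁ = μ(closedBall x ‖x−X₁‖)` for `X₁ ∼ μ` and no ties,
for every `0 ≤ r ≤ 2s−2`, `E[(1−P₁)^{2s−2−r} P₁^r] = 1/(C(2s−2,r)·(2s−1))`. -/
theorem ball_mass_moment {D s r : ℕ} (hs : 1 ≤ s) (hr : r ≤ 2 * s - 2)
    (μ : Measure (EuclideanSpace ℝ (Fin D))) [IsProbabilityMeasure μ]
    (x : EuclideanSpace ℝ (Fin D))
    (hties : ∀ c : ℝ, μ {y | dist y x = c} = 0) :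
    ∫ y, (1 - (μ (Metric.closedBall x (dist x y))).toReal) ^ (2 * s - 2 - r)
          * ((μ (Metric.closedBall x (dist x y))).toReal) ^ r ∂μ
      = 1 / (((2 * s - 2).choose r : ℝ) * (2 * (s : ℝ) - 1)) := by
  set n := 2 * s - 2 with hn
  set a := n - r with ha
  have hφ : Measurable (fun y : EuclideanSpace ℝ (Fin D) => dist x y) :=
    (continuous_const.dist continuous_id).measurable
  set ν : Measure ℝ := μ.map (fun y => dist x y) with hν
  have : IsProbabilityMeasure ν := Measure.isProbabilityMeasure_map hφ.aemeasurable
  have hatom : ∀ c : ℝ, ν {c} = 0 := by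
    intro c
    rw [hν, Measure.map_apply hφ (measurableSet_singleton c)]
    have : (fun y : EuclideanSpace ℝ (Fin D) => dist x y) ⁻¹' {c} = {y | dist y x = c} := by
      ext y; simp [dist_comm]
    rw [this]; exact hties c
  have hIic : ∀ t : ℝ, ν (Iic t) = μ (Metric.closedBall x t) := by
    intro t
    rw [hν, Measure.map_apply hφ measurableSet_Iic]
    congr 1
    ext y
    simp [Metric.mem_closedBall, dist_comm]
  have hG : ∀ y, (μ (Metric.closedBall x (dist x y))).toReal = cdf ν (dist x y) := by
    intro y
    rw [cdf_eq_real, measureReal_def, hIic]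
  have hcdfm : Measurable (cdf ν) := (monotone_cdf ν).measurable
  have hgc : Continuous (fun p : ℝ => (1 - p) ^ a * p ^ r) := by continuity
  -- rewrite integrand
  have hint1 : ∫ y, (1 - (μ (Metric.closedBall x (dist x y))).toReal) ^ a
          * ((μ (Metric.closedBall x (dist x y))).toReal) ^ r ∂μ
      = ∫ y, (1 - cdf ν (dist x y)) ^ a * (cdf ν (dist x y)) ^ r ∂μ := by
    congr 1; funext y; rw [hG]
  have hmapmap : μ.map (fun y => cdf ν (dist x y)) = ν.map (cdf ν) := by
    exact (Measure.map_map hcdfm hφ).symm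
  have hint2 : ∫ y, (1 - cdf ν (dist x y)) ^ a * (cdf ν (dist x y)) ^ r ∂μ
      = ∫ p, (1 - p) ^ a * p ^ r ∂(ν.map (cdf ν)) := by
    rw [← hmapmap]
    exact (integral_map (hcdfm.comp hφ).aemeasurable hgc.aestronglyMeasurable).symm
  have hmap : ν.map (cdf ν) = volume.restrict (Set.Icc (0:ℝ) 1) :=
    map_cdf_eq_uniform ν hatom
  have hint3 : ∫ p, (1 - p) ^ a * p ^ r ∂(ν.map (cdf ν))
      = ∫ p in (0:ℝ)..1, p ^ r * (1 - p) ^ a := by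
    rw [hmap, intervalIntegral.integral_of_le zero_le_one,
      ← MeasureTheory.integral_Icc_eq_integral_Ioc]
    congr 1; funext p; ring
  rw [hint1, hint2, hint3, beta_nat r a]
  -- arithmetic
  have hra : r + a = n := by omega
  have hn1 : n + 1 = 2 * s - 1 := by omega
  have hcast : (2 * (s:ℝ) - 1) = ((n + 1 : ℕ) : ℝ) := by
    push_cast [hn1]
    have : (1:ℝ) ≤ (s:ℝ) := by exact_mod_cast hs
    push_cast [Nat.cast_sub (by omega : 1 ≤ 2 * s)]
    ring
  rw [hcast, hra]
  have hkey : (n.choose r : ℝ) * ((n+1 : ℕ) : ℝ) * (r.factorial * a.factorial)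
      = ((n+1).factorial : ℝ) := by
    have h := Nat.choose_mul_factorial_mul_factorial hr
    have : n.choose r * (n+1) * (r.factorial * a.factorial) = (n+1).factorial := by
      rw [Nat.factorial_succ]
      calc n.choose r * (n+1) * (r.factorial * a.factorial)
          = (n+1) * (n.choose r * r.factorial * (n-r).factorial) := by rw [ha]; ring
       _ = (n+1) * n.factorial := by rw [h]
    exact_mod_cast congrArg (Nat.cast : ℕ → ℝ) this
  have hpos1 : (0:ℝ) < ((n+1).factorial : ℝ) := by exact_mod_cast Nat.factorial_pos _
  have hpos2 : (0:ℝ) < (n.choose r : ℝ) * ((n+1:ℕ) : ℝ) := by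
    have h1 : (0:ℝ) < (n.choose r : ℝ) := by exact_mod_cast Nat.choose_pos hr
    have h2 : (0:ℝ) < ((n+1:ℕ) : ℝ) := by exact_mod_cast Nat.succ_pos n
    exact mul_pos h1 h2
  rw [div_eq_div_iff hpos1.ne' hpos2.ne', one_mul]
  linear_combination hkey
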